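/- Pivoting on an edge {u,v} swaps the neighborhoods of u and v: for any vertex w ∉ {u,v}, w is adjacent to u in G ∧ uv if and only if w is adjacent to v in G, and w is adjacent to v in G ∧ uv if and only if w is adjacent to u in G. -/

import Mathlib

/-- Local complementation of a simple graph `G` at a vertex `u`: toggles all
edges between pairs of distinct neighbors of `u`, leaving all other edges unchanged. -/
def localComp {V : Type*} (G : SimpleGraph V) (u : V) : SimpleGraph V where
  Adj v w := v ≠ w ∧ Xor' (G.Adj v w) (G.Adj u v ∧ G.Adj u w)
  symm := by
    constructor
    rintro v w ⟨h1, h2⟩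
    refine ⟨h1.symm, ?_⟩
    rwa [G.adj_comm w v, and_comm]
  loopless := by constructor; rintro v ⟨h, _⟩; exact h rfl

/-- The pivot of `G` along the edge `{u,v}`: `G ∧ uv = ((G * u) * v) * u`. -/
def pivot {V : Type*} (G : SimpleGraph V) (u v : V) : SimpleGraph V :=
  localComp (localComp (localComp G u) v) u

lemma localComp_adj {V : Type*} (G : SimpleGraph V) (u a b : V) :
    (localComp G u).Adj a b ↔ a ≠ b ∧ Xor' (G.Adj a b) (G.Adj u a ∧ G.Adj u b) :=
  Iff.rfl

/-- Pivoting on an edge `{u,v}` swaps the neighborhoods of `u` and `v`: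
for any vertex `w ∉ {u,v}`, `w` is adjacent to `u` in `G ∧ uv` iff `w` is adjacent to
`v` in `G`, and `w` is adjacent to `v` in `G ∧ uv` iff `w` is adjacent to `u` in `G`. -/
theorem pivot_swaps_neighborhoods {V : Type*} (G : SimpleGraph V) (u v : V)
    (huv : G.Adj u v) (w : V) (hwu : w ≠ u) (hwv : w ≠ v) :
    ((pivot G u v).Adj u w ↔ G.Adj v w) ∧ ((pivot G u v).Adj v w ↔ G.Adj u w) := by
  have huv' : u ≠ v := G.ne_of_adj huv
  have hvu : G.Adj v u := huv.symm
  have h1 : ¬ G.Adj u u := G.loopless.irrefl u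
  have h2 : ¬ G.Adj v v := G.loopless.irrefl v
  simp only [pivot, localComp_adj, Xor', ne_eq]
  by_cases hA : G.Adj u w <;> by_cases hB : G.Adj v w <;> by_cases hC : G.Adj w w <;>
    simp_all <;> tauto
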